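/- (Theorem 5(b), existence) Let h ≥ √2/2. For k ∈ {0,1,2} let R_k be the rotation of ℝ³ about the third coordinate axis by angle 2πk/3, and for ε ∈ {−1,1} set u_{k,ε} = R_k(0, √(2/(2h²+1)), ε√((2h²−1)/(2h²+1))) and c_k = R_k(1/(4h²+2), 0, 0). Then each u_{k,ε} is a unit vector, ⟨c_k, u_{k,ε}⟩ = 0, and the cylinder with axis point c_k, direction u_{k,ε}, and radius ρ = (4h²+1)/(4h²+2) is circumscribed to the five vertices of BP: ‖pᵢ − c_k‖² − ⟨pᵢ − c_k, u_{k,ε}⟩² = ρ² for all i = 1,…,5. -/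

import Mathlib

/-- The five vertices of the trigonal bipyramid `BP` of interapex half-height `h`. -/
noncomputable def bp (h : ℝ) : Fin 5 → EuclideanSpace ℝ (Fin 3) := fun i =>
  (WithLp.equiv 2 (Fin 3 → ℝ)).symm
    (![![0, 0, h], ![0, 0, -h], ![1, 0, 0], ![-(1/2), Real.sqrt 3 / 2, 0],
       ![-(1/2), -(Real.sqrt 3 / 2), 0]] i)

/-- Rotation about the third coordinate axis by angle `θ`. -/
noncomputable def rotZ (θ : ℝ) (v : EuclideanSpace ℝ (Fin 3)) : EuclideanSpace ℝ (Fin 3) :=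
  (WithLp.equiv 2 (Fin 3 → ℝ)).symm
    ![v 0 * Real.cos θ - v 1 * Real.sin θ, v 0 * Real.sin θ + v 1 * Real.cos θ, v 2]

/-- The axis direction `u_{k,ε} = R_k (0, √(2/(2h²+1)), ε√((2h²−1)/(2h²+1)))`. -/
noncomputable def ubp (h : ℝ) (k : Fin 3) (ε : ℝ) : EuclideanSpace ℝ (Fin 3) :=
  rotZ (2 * Real.pi * (k : ℕ) / 3) ((WithLp.equiv 2 (Fin 3 → ℝ)).symm
    ![0, Real.sqrt (2 / (2 * h ^ 2 + 1)),
      ε * Real.sqrt ((2 * h ^ 2 - 1) / (2 * h ^ 2 + 1))])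

/-- The axis point `c_k = R_k (1/(4h²+2), 0, 0)`. -/
noncomputable def cbp (h : ℝ) (k : Fin 3) : EuclideanSpace ℝ (Fin 3) :=
  rotZ (2 * Real.pi * (k : ℕ) / 3)
    ((WithLp.equiv 2 (Fin 3 → ℝ)).symm ![1 / (4 * h ^ 2 + 2), 0, 0])

lemma norm3 (x : EuclideanSpace ℝ (Fin 3)) : ‖x‖^2 = x 0^2 + x 1^2 + x 2^2 := by
  rw [EuclideanSpace.norm_eq, Real.sq_sqrt (by positivity)]; simp [Fin.sum_univ_three]

lemma inner3 (x y : EuclideanSpace ℝ (Fin 3)) :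
    (inner ℝ x y : ℝ) = x 0 * y 0 + x 1 * y 1 + x 2 * y 2 := by
  simp [PiLp.inner_apply, Fin.sum_univ_three]; ring

set_option maxHeartbeats 2000000 in
/-- Theorem 5(b), existence: for `h ≥ √2/2`, each `u_{k,ε}` is a unit vector orthogonal to
`c_k`, and the cylinder with axis point `c_k`, direction `u_{k,ε}` and radius
`(4h²+1)/(4h²+2)` is circumscribed to the five vertices of `BP`. -/
theorem bipyramid_six_circumscribed_cylinders_exist (h : ℝ)
    (hh : Real.sqrt 2 / 2 ≤ h) (k : Fin 3) (ε : ℝ) (hε : ε = 1 ∨ ε = -1) :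
    ‖ubp h k ε‖ = 1 ∧ (inner ℝ (cbp h k) (ubp h k ε) : ℝ) = 0 ∧
      ∀ i : Fin 5, ‖bp h i - cbp h k‖ ^ 2 - (inner ℝ (bp h i - cbp h k) (ubp h k ε) : ℝ) ^ 2
        = ((4 * h ^ 2 + 1) / (4 * h ^ 2 + 2)) ^ 2 := by
  have hε2 : ε^2 = 1 := by rcases hε with rfl | rfl <;> norm_num
  have h2 : 1/2 ≤ h^2 := by
    nlinarith [Real.sq_sqrt (by norm_num : (0:ℝ) ≤ 2), Real.sqrt_nonneg 2]
  have hne : (2*h^2+1) ≠ 0 := by positivity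
  have hne' : (4*h^2+2) ≠ 0 := by positivity
  have ha : Real.sqrt (2/(2*h^2+1)) ^ 2 = 2/(2*h^2+1) := Real.sq_sqrt (by positivity)
  have hb : Real.sqrt ((2*h^2-1)/(2*h^2+1)) ^ 2 = (2*h^2-1)/(2*h^2+1) :=
    Real.sq_sqrt (div_nonneg (by linarith) (by positivity))
  have hs3 : Real.sqrt 3 ^ 2 = 3 := Real.sq_sqrt (by norm_num)
  have hc1 : Real.cos (2*Real.pi/3) = -(1/2) := by
    rw [show 2*Real.pi/3 = Real.pi - Real.pi/3 by ring, Real.cos_pi_sub, Real.cos_pi_div_three]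
  have hs1 : Real.sin (2*Real.pi/3) = Real.sqrt 3/2 := by
    rw [show 2*Real.pi/3 = Real.pi - Real.pi/3 by ring, Real.sin_pi_sub, Real.sin_pi_div_three]
  have hc2 : Real.cos (2*Real.pi*2/3) = -(1/2) := by
    rw [show 2*Real.pi*2/3 = Real.pi + Real.pi/3 by ring, Real.cos_add]
    simp [Real.cos_pi_div_three]
  have hs2 : Real.sin (2*Real.pi*2/3) = -(Real.sqrt 3/2) := by
    rw [show 2*Real.pi*2/3 = Real.pi + Real.pi/3 by ring, Real.sin_add]
    simp [Real.sin_pi_div_three]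
  ring_nf at ha hb hs3 hε2
  fin_cases k <;>
  refine ⟨?_, ?_, ?_⟩
  all_goals try (
    rw [show (1:ℝ) = Real.sqrt 1 by simp, ← Real.sqrt_sq (norm_nonneg _)];
    congr 1;
    rw [norm3];
    simp only [ubp, rotZ, WithLp.equiv_symm_apply, PiLp.toLp_apply, WithLp.ofLp_toLp, Matrix.cons_val_zero, Matrix.cons_val_one,
      Matrix.head_cons, Matrix.cons_val_two, Matrix.tail_cons, Fin.isValue, Fin.val_zero,
      Fin.val_one, Fin.val_two, Nat.cast_zero, Nat.cast_one, Nat.cast_ofNat, mul_zero, mul_one,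
      zero_div, Real.cos_zero, Real.sin_zero, hc1, hs1, hc2, hs2];
    ring_nf;
    simp only [ha, hb, hε2, hs3];
    field_simp;
    ring)
  all_goals try (
    rw [inner3];
    simp only [ubp, cbp, rotZ, WithLp.equiv_symm_apply, PiLp.toLp_apply, WithLp.ofLp_toLp, Matrix.cons_val_zero,
      Matrix.cons_val_one, Matrix.head_cons, Matrix.cons_val_two, Matrix.tail_cons, Fin.isValue,
      Fin.val_zero, Fin.val_one, Fin.val_two, Nat.cast_zero, Nat.cast_one, Nat.cast_ofNat,
      mul_zero, mul_one, zero_div, Real.cos_zero, Real.sin_zero, hc1, hs1, hc2, hs2];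
    ring)
  all_goals (
    intro i;
    fin_cases i <;>
    · rw [norm3, inner3]
      simp only [ubp, cbp, bp, rotZ, PiLp.sub_apply, WithLp.equiv_symm_apply, PiLp.toLp_apply, WithLp.ofLp_toLp,
        Matrix.cons_val_zero, Matrix.cons_val_one, Matrix.head_cons, Matrix.cons_val_two,
        Matrix.tail_cons, Fin.isValue, Fin.val_zero, Fin.val_one, Fin.val_two, Nat.cast_zero,
        Nat.cast_one, Nat.cast_ofNat, mul_zero, mul_one, zero_div, Real.cos_zero, Real.sin_zero,
        hc1, hs1, hc2, hs2, Matrix.cons_val, Fin.zero_eta, Fin.mk_one, Fin.reduceFinMk]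
      try norm_num
      ring_nf
      try simp only [ha, hb, hε2, hs3]
      field_simp
      try simp (disch := positivity) only [Real.sq_sqrt]
      ring)
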